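/- For m ≥ 7, there exists an abelian Lie subalgebra of 𝔰𝔩_m(ℝ) of dimension m − 1, contained in the standard Borel subalgebra of upper triangular traceless matrices, which is not a limit in the Grassmannian Gr_{m−1}(𝔰𝔩_m(ℝ)) of Cartan subspaces of 𝔰𝔩_m(ℝ). -/

import Mathlib

open Matrix Filter

noncomputable section

/-- Convergence of a sequence of subspaces (given as subsets of the ambient space) to a
limit subspace, in the Kuratowski sense; for subspaces of a fixed finite dimension this
is exactly convergence in the Grassmannian. -/
def GrLimit {M : Type*} [TopologicalSpace M] (W : ℕ → Set M) (L : Set M) : Prop :=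
  (∀ v ∈ L, ∃ u : ℕ → M, (∀ n, u n ∈ W n) ∧ Tendsto u atTop (nhds v)) ∧
  (∀ φ : ℕ → ℕ, StrictMono φ → ∀ u : ℕ → M, (∀ n, u n ∈ W (φ n)) →
    ∀ v : M, Tendsto u atTop (nhds v) → v ∈ L)

/-- A matrix is diagonalizable over `ℝ`. -/
def IsRealDiagonalizable {m : ℕ} (X : Matrix (Fin m) (Fin m) ℝ) : Prop :=
  ∃ P : Matrix (Fin m) (Fin m) ℝ, ∃ d : Fin m → ℝ,
    IsUnit P.det ∧ X = P * Matrix.diagonal d * P⁻¹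

/-- A Cartan subspace of `𝔰𝔩_m(ℝ)`: a maximal abelian subalgebra consisting of traceless
matrices diagonalizable over `ℝ`. -/
def IsCartanSubspace {m : ℕ} (C : Submodule ℝ (Matrix (Fin m) (Fin m) ℝ)) : Prop :=
  (∀ X ∈ C, Matrix.trace X = 0) ∧
  (∀ X ∈ C, ∀ Y ∈ C, X * Y = Y * X) ∧
  (∀ X ∈ C, IsRealDiagonalizable X) ∧
  (∀ C' : Submodule ℝ (Matrix (Fin m) (Fin m) ℝ), C ≤ C' →
    (∀ X ∈ C', Matrix.trace X = 0) → (∀ X ∈ C', ∀ Y ∈ C', X * Y = Y * X) →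
    (∀ X ∈ C', IsRealDiagonalizable X) → C' = C)

namespace Stmt9Aux

open Polynomial Module

variable {m : ℕ}

abbrev Mat (m : ℕ) := Matrix (Fin m) (Fin m) ℝ

/-- the endomorphism of a matrix -/
def tE (X : Mat m) : Module.End ℝ (Fin m → ℝ) := Matrix.toLinAlgEquiv' X

lemma tE_apply (X : Mat m) (v : Fin m → ℝ) : tE X v = X *ᵥ v := by
  simp [tE]

/-- columns of P are eigenvectors; they span. -/
lemma eigen_sup_of_diag {X : Mat m} (h : IsRealDiagonalizable X) :
    ⨆ μ : ℝ, (tE X).eigenspace μ = ⊤ := by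
  obtain ⟨P, d, hP, hX⟩ := h
  rw [eq_top_iff]
  rintro y -
  have hXP : X * P = P * Matrix.diagonal d := by
    rw [hX, Matrix.mul_assoc, Matrix.mul_assoc, Matrix.nonsing_inv_mul P hP, Matrix.mul_one]
  have hcol : ∀ j : Fin m, (P *ᵥ (Pi.single j 1 : Fin m → ℝ)) ∈ (tE X).eigenspace (d j) := by
    intro j
    rw [Module.End.mem_eigenspace_iff]
    have h1 : X *ᵥ (P *ᵥ (Pi.single j 1 : Fin m → ℝ)) = (P * Matrix.diagonal d) *ᵥ (Pi.single j 1 : Fin m → ℝ) := by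
      rw [Matrix.mulVec_mulVec, hXP]
    have h2 : (Pi.single j (d j * 1) : Fin m → ℝ) = d j • (Pi.single j 1 : Fin m → ℝ) := by
      rw [← Pi.single_smul, smul_eq_mul]
    rw [tE_apply, h1, ← Matrix.mulVec_mulVec, Matrix.diagonal_mulVec_single, h2,
      Matrix.mulVec_smul]
  have hy : y = ∑ j : Fin m, (P⁻¹ *ᵥ y) j • (P *ᵥ (Pi.single j 1 : Fin m → ℝ)) := by
    have h3 : ∑ j : Fin m, (P⁻¹ *ᵥ y) j • (P *ᵥ (Pi.single j 1 : Fin m → ℝ))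
        = P *ᵥ (∑ j : Fin m, (P⁻¹ *ᵥ y) j • (Pi.single j 1 : Fin m → ℝ)) := by
      simp only [← Matrix.mulVecLin_apply, ← _root_.map_smul, ← map_sum]
    have h4 : (∑ j : Fin m, (P⁻¹ *ᵥ y) j • (Pi.single j 1 : Fin m → ℝ)) = P⁻¹ *ᵥ y := by
      funext i
      simp [Finset.sum_apply, Pi.single_apply]
    rw [h3, h4, Matrix.mulVec_mulVec, Matrix.mul_nonsing_inv P hP, Matrix.one_mulVec]
  rw [hy]
  exact Submodule.sum_mem _ fun j _ => Submodule.smul_mem _ _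
    (le_iSup (fun μ => (tE X).eigenspace μ) (d j) (hcol j))

/-- a conjugation algebra homomorphism -/
def conjHom (P : Mat m) (hP : IsUnit P.det) : Mat m →ₐ[ℝ] Mat m where
  toFun A := P * A * P⁻¹
  map_one' := by show P * 1 * P⁻¹ = 1; rw [Matrix.mul_one, Matrix.mul_nonsing_inv P hP]
  map_mul' A B := by
    show P * (A * B) * P⁻¹ = (P * A * P⁻¹) * (P * B * P⁻¹)
    rw [show (P * A * P⁻¹) * (P * B * P⁻¹) = P * A * (P⁻¹ * P) * (B * P⁻¹) by
      simp only [Matrix.mul_assoc]]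
    rw [Matrix.nonsing_inv_mul P hP, Matrix.mul_one]
    simp only [Matrix.mul_assoc]
  map_zero' := by simp
  map_add' A B := by show P * (A + B) * P⁻¹ = _; rw [Matrix.mul_add, Matrix.add_mul]
  commutes' r := by
    show P * algebraMap ℝ (Mat m) r * P⁻¹ = algebraMap ℝ (Mat m) r
    simp only [Algebra.algebraMap_eq_smul_one, Matrix.mul_smul, Matrix.mul_one,
      Matrix.smul_mul, Matrix.mul_nonsing_inv P hP]

lemma semisimple_of_diag {X : Mat m} (h : IsRealDiagonalizable X) :
    (tE X).IsFinitelySemisimple := by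
  obtain ⟨P, d, hP, hX⟩ := h
  set q : ℝ[X] := ∏ μ ∈ Finset.image d Finset.univ, (Polynomial.X - C μ) with hq
  have hsq : Squarefree q := by
    refine (Polynomial.separable_prod_X_sub_C_iff' (f := id)
      (s := Finset.image d Finset.univ)).2 (fun x _ y _ h => h) |>.squarefree
  have hdvec : Polynomial.aeval d q = 0 := by
    funext i
    have : (Polynomial.aeval d q) i = Polynomial.aeval (d i) q :=
      (Polynomial.aeval_algHom_apply (Pi.evalAlgHom ℝ (fun _ : Fin m => ℝ) i) d q).symm
    rw [this, hq, map_prod]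
    refine Finset.prod_eq_zero (Finset.mem_image_of_mem d (Finset.mem_univ i)) ?_
    simp
  have hdiag : Polynomial.aeval (Matrix.diagonal d : Mat m) q = 0 := by
    have h5 : (Matrix.diagonal d : Mat m) = (Matrix.diagonalAlgHom (n := Fin m) (α := ℝ) ℝ) d := rfl
    rw [h5, Polynomial.aeval_algHom_apply, hdvec, map_zero]
  have hX0 : Polynomial.aeval X q = 0 := by
    have h6 : X = conjHom P hP (Matrix.diagonal d) := hX
    rw [h6, Polynomial.aeval_algHom_apply, hdiag, map_zero]
  have hE0 : Polynomial.aeval (tE X) q = 0 := by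
    have h7 : tE X = (Matrix.toLinAlgEquiv' (R := ℝ) (n := Fin m)) X := rfl
    rw [h7, Polynomial.aeval_algHom_apply, hX0, map_zero]
  exact (Module.End.isSemisimple_of_squarefree_aeval_eq_zero hsq hE0).isFinitelySemisimple

lemma diag_of_eigen_sup {Y : Mat m} (h : ⨆ μ : ℝ, (tE Y).eigenspace μ = ⊤) :
    IsRealDiagonalizable Y := by
  have hInd : iSupIndep (tE Y).eigenspace := Module.End.eigenspaces_iSupIndep (tE Y)
  have hInt : DirectSum.IsInternal (fun μ : ℝ => (tE Y).eigenspace μ) :=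
    (DirectSum.isInternal_submodule_iff_iSupIndep_and_iSup_eq_top _).2 ⟨hInd, h⟩
  let bs : (μ : ℝ) → Basis (Fin (Module.finrank ℝ ((tE Y).eigenspace μ))) ℝ
      ((tE Y).eigenspace μ) := fun μ => Module.finBasis ℝ _
  let cb := hInt.collectedBasis bs
  let e := cb.indexEquiv (Pi.basisFun ℝ (Fin m))
  let b : Basis (Fin m) ℝ (Fin m → ℝ) := cb.reindex e
  let dd : Fin m → ℝ := fun j => (e.symm j).1
  have hb : ∀ j, b j ∈ (tE Y).eigenspace (dd j) := by
    intro j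
    have h2 := hInt.collectedBasis_mem bs (e.symm j)
    have h3 : b j = cb (e.symm j) := cb.reindex_apply e j
    rw [h3]
    exact h2
  have hbe : ∀ j, Y *ᵥ (b j) = dd j • b j := by
    intro j
    have h3 := (Module.End.mem_eigenspace_iff).1 (hb j)
    rw [tE_apply] at h3
    exact h3
  set P : Mat m := Matrix.of (fun i j => b j i) with hPdef
  have hPQ : P * ((b.toMatrix (Pi.basisFun ℝ (Fin m)))) = 1 := by
    have h0 : (Pi.basisFun ℝ (Fin m)).toMatrix ⇑b = P := by
      ext i j
      simp [Basis.toMatrix_apply, Pi.basisFun_repr, hPdef]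
    rw [← h0, Basis.toMatrix_mul_toMatrix_flip]
  have hP : IsUnit P.det := by
    refine IsUnit.of_mul_eq_one ((b.toMatrix (Pi.basisFun ℝ (Fin m))).det) ?_
    rw [← Matrix.det_mul, hPQ, Matrix.det_one]
  have hYP : Y * P = P * Matrix.diagonal dd := by
    ext i j
    have h1 : (Y * P) i j = (Y *ᵥ b j) i := by
      simp [Matrix.mul_apply, Matrix.mulVec, dotProduct, hPdef]
    rw [h1, hbe j]
    simp [Matrix.mul_diagonal, hPdef, mul_comm]
  refine ⟨P, dd, hP, ?_⟩
  have hPinv : P * P⁻¹ = 1 := Matrix.mul_nonsing_inv P hP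
  calc Y = Y * (P * P⁻¹) := by rw [hPinv, Matrix.mul_one]
    _ = (Y * P) * P⁻¹ := by rw [Matrix.mul_assoc]
    _ = P * Matrix.diagonal dd * P⁻¹ := by rw [hYP]

lemma eigen_le_max (f : Module.End ℝ (Fin m → ℝ)) (μ : ℝ) :
    f.eigenspace μ ≤ f.maxGenEigenspace μ := by
  have : f.eigenspace μ = f.genEigenspace μ 1 := rfl
  rw [this]
  exact (f.genEigenspace μ).monotone le_top

lemma tE_mul (a b : Mat m) : tE (a * b) = tE a * tE b := by
  show (Matrix.toLinAlgEquiv' (a*b) : Module.End ℝ (Fin m → ℝ)) = _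
  rw [_root_.map_mul]
  rfl

lemma max_sup_of_diag {X : Mat m} (hX : IsRealDiagonalizable X) :
    ⨆ μ : ℝ, (tE X).maxGenEigenspace μ = ⊤ := by
  rw [eq_top_iff, ← eigen_sup_of_diag hX]
  exact iSup_mono fun μ => eigen_le_max _ μ

lemma key_diag {u c : Mat m} (hcomm : u * c = c * u) (hu : IsRealDiagonalizable u)
    (hc : IsRealDiagonalizable c) (t s : ℝ) :
    IsRealDiagonalizable (c + t • (u * u) + s • 1) := by
  set f : Fin 2 → Module.End ℝ (Fin m → ℝ) := ![tE u, tE c] with hf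
  have hcE : Commute (tE u) (tE c) := by
    show tE u * tE c = tE c * tE u
    rw [← tE_mul, ← tE_mul, hcomm]
  have hfc : Pairwise fun i j => Commute (f i) (f j) := by
    intro i j hij
    fin_cases i <;> fin_cases j <;> simp only [hf, Matrix.cons_val_zero, Matrix.cons_val_one,
      Matrix.head_cons]
    · exact Commute.refl _
    · exact hcE
    · exact hcE.symm
    · exact Commute.refl _
  have hsup : ∀ i, ⨆ μ, (f i).maxGenEigenspace μ = ⊤ := by
    intro i
    fin_cases i
    · exact max_sup_of_diag hu
    · exact max_sup_of_diag hc
  have hjoint :=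
    Module.End.iSup_iInf_maxGenEigenspace_eq_top_of_iSup_maxGenEigenspace_eq_top_of_commute
      f hfc hsup
  apply diag_of_eigen_sup
  rw [eq_top_iff, ← hjoint]
  refine iSup_le fun χ => ?_
  refine le_trans (fun x hx => ?_) (le_iSup (fun μ => (tE (c + t • (u * u) + s • 1)).eigenspace μ)
    (χ 1 + t * (χ 0 * χ 0) + s))
  have hx0 : u *ᵥ x = χ 0 • x := by
    have hmem : x ∈ (f 0).maxGenEigenspace (χ 0) :=
      (iInf_le (fun i => (f i).maxGenEigenspace (χ i)) 0 : _ ≤ _) hx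
    rw [hf] at hmem
    simp only [Matrix.cons_val_zero] at hmem
    rw [(semisimple_of_diag hu).maxGenEigenspace_eq_eigenspace] at hmem
    have := Module.End.mem_eigenspace_iff.1 hmem
    rw [tE_apply] at this
    exact this
  have hx1 : c *ᵥ x = χ 1 • x := by
    have hmem : x ∈ (f 1).maxGenEigenspace (χ 1) :=
      (iInf_le (fun i => (f i).maxGenEigenspace (χ i)) 1 : _ ≤ _) hx
    rw [hf] at hmem
    simp only [Matrix.cons_val_one, Matrix.head_cons, Matrix.cons_val_fin_one] at hmem
    rw [(semisimple_of_diag hc).maxGenEigenspace_eq_eigenspace] at hmem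
    have := Module.End.mem_eigenspace_iff.1 hmem
    rw [tE_apply] at this
    exact this
  rw [Module.End.mem_eigenspace_iff, tE_apply]
  rw [Matrix.add_mulVec, Matrix.add_mulVec, Matrix.smul_mulVec,
    Matrix.smul_mulVec, Matrix.one_mulVec, ← Matrix.mulVec_mulVec, hx0,
    Matrix.mulVec_smul, hx0, hx1]
  module

lemma cartan_closure (hm : 0 < m) {C : Submodule ℝ (Mat m)} (hC : IsCartanSubspace C)
    {u : Mat m} (hu : u ∈ C) :
    u * u - ((Matrix.trace (u * u)) / (m : ℝ)) • 1 ∈ C := by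
  obtain ⟨htr, hcomm, hdiag, hmax⟩ := hC
  have hm0 : (m : ℝ) ≠ 0 := Nat.cast_ne_zero.mpr hm.ne'
  set lam : ℝ := Matrix.trace (u*u) / m with hlam
  set w : Mat m := u * u - lam • 1 with hw
  set C' := C ⊔ (Submodule.span ℝ {w}) with hC'
  have hmem : ∀ X ∈ C', ∃ c ∈ C, ∃ t : ℝ, X = c + t • w := by
    intro X hX
    rw [hC', Submodule.mem_sup] at hX
    obtain ⟨c, hc, z, hz, hsum⟩ := hX
    rw [Submodule.mem_span_singleton] at hz
    obtain ⟨t, ht⟩ := hz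
    exact ⟨c, hc, t, by rw [← hsum, ← ht]⟩
  have hcu : ∀ c ∈ C, c * (u*u) = (u*u) * c := by
    intro c hc
    have h2 := hcomm u hu c hc
    rw [← Matrix.mul_assoc, ← h2, Matrix.mul_assoc, ← h2, ← Matrix.mul_assoc]
  have hwc : ∀ c ∈ C, c * w = w * c := by
    intro c hc
    rw [hw, mul_sub, sub_mul, hcu c hc, Matrix.mul_smul, Matrix.smul_mul, mul_one, one_mul]
  have htrw : Matrix.trace w = 0 := by
    rw [hw, Matrix.trace_sub, Matrix.trace_smul, Matrix.trace_one, hlam]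
    simp only [Fintype.card_fin, smul_eq_mul]
    field_simp
    ring
  have htr' : ∀ X ∈ C', Matrix.trace X = 0 := by
    intro X hX
    obtain ⟨c, hc, t, rfl⟩ := hmem X hX
    rw [Matrix.trace_add, Matrix.trace_smul, htr c hc, htrw, smul_zero, add_zero]
  have hcomm' : ∀ X ∈ C', ∀ Y ∈ C', X * Y = Y * X := by
    intro X hX Y hY
    obtain ⟨c, hc, t, rfl⟩ := hmem X hX
    obtain ⟨c', hc', t', rfl⟩ := hmem Y hY
    simp only [mul_add, add_mul, Matrix.mul_smul, Matrix.smul_mul]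
    rw [hcomm c hc c' hc', hwc c hc, hwc c' hc', smul_smul, smul_smul, mul_comm t' t]
    abel
  have hdiag' : ∀ X ∈ C', IsRealDiagonalizable X := by
    intro X hX
    obtain ⟨c, hc, t, rfl⟩ := hmem X hX
    have hXeq : c + t • w = c + t • (u * u) + (-(t * lam)) • 1 := by
      rw [hw, smul_sub, smul_smul, neg_smul, ← sub_eq_add_neg, add_sub_assoc]
    rw [hXeq]
    exact key_diag (hcomm u hu c hc) (hdiag u hu) (hdiag c hc) t (-(t * lam))
  have h4 : C' = C := hmax C' le_sup_left htr' hcomm' hdiag'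
  have h5 : w ∈ C' := Submodule.mem_sup_right (Submodule.mem_span_singleton_self w)
  rw [h4] at h5
  exact h5

section Construction

variable (m : ℕ)

def dvec : Fin m → ℝ := fun i => (if (i : ℕ) = 2 then 1 else 0) - (if (i : ℕ) = 3 then 1 else 0)

def DD : Mat m := Matrix.diagonal (dvec m)

def rrow (hm : 7 ≤ m) (k : Fin (m - 1)) : Fin m :=
  if (k : ℕ) + 4 ≤ m then ⟨0, by omega⟩ else ⟨1, by omega⟩

def ccol (hm : 7 ≤ m) (k : Fin (m - 1)) : Fin m :=
  if h : (k : ℕ) + 4 ≤ m then ⟨(k : ℕ) + 3, by omega⟩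
  else if (k : ℕ) + 3 = m then ⟨4, by omega⟩ else ⟨5, by omega⟩

def g (hm : 7 ≤ m) (k : Fin (m - 1)) : Mat m :=
  if (k : ℕ) = 0 then DD m else Matrix.single (rrow m hm k) (ccol m hm k) 1

lemma row_le1 (hm : 7 ≤ m) (k : Fin (m - 1)) : ((rrow m hm k : Fin m) : ℕ) ≤ 1 := by
  unfold rrow; split <;> simp

lemma col_ge4 (hm : 7 ≤ m) {k : Fin (m - 1)} (hk : (k : ℕ) ≠ 0) :
    4 ≤ ((ccol m hm k : Fin m) : ℕ) := by
  unfold ccol; split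
  · simp; omega
  · split <;> simp

lemma pos_inj (hm : 7 ≤ m) {k l : Fin (m - 1)} (hk : (k : ℕ) ≠ 0) (hl : (l : ℕ) ≠ 0)
    (hr : rrow m hm k = rrow m hm l) (hc : ccol m hm k = ccol m hm l) : k = l := by
  have hk2 := k.2
  have hl2 := l.2
  have hrv := congrArg Fin.val hr
  have hcv := congrArg Fin.val hc
  unfold rrow at hrv
  unfold ccol at hcv
  apply Fin.ext
  split_ifs at hrv hcv <;> simp only [Fin.val_mk] at hrv hcv <;> omega

lemma dvec_row (hm : 7 ≤ m) (k : Fin (m - 1)) : dvec m (rrow m hm k) = 0 := by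
  have h := row_le1 m hm k
  unfold dvec
  have h2 : ¬((rrow m hm k : ℕ) = 2) := by omega
  have h3 : ¬((rrow m hm k : ℕ) = 3) := by omega
  rw [if_neg h2, if_neg h3, sub_zero]

lemma dvec_col (hm : 7 ≤ m) {k : Fin (m - 1)} (hk : (k : ℕ) ≠ 0) : dvec m (ccol m hm k) = 0 := by
  have h := col_ge4 m hm hk
  unfold dvec
  have h2 : ¬((ccol m hm k : ℕ) = 2) := by omega
  have h3 : ¬((ccol m hm k : ℕ) = 3) := by omega
  rw [if_neg h2, if_neg h3, sub_zero]

lemma diagonal_mul_std {v : Fin m → ℝ} {r c : Fin m} (h : v r = 0) :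
    Matrix.diagonal v * Matrix.single r c 1 = 0 := by
  ext i j
  rw [Matrix.diagonal_mul]
  by_cases hir : r = i
  · subst hir; rw [h, zero_mul]; rfl
  · rw [Matrix.single_apply_of_ne _ _ _ _ _ (by tauto), mul_zero]; rfl

lemma std_mul_diagonal {v : Fin m → ℝ} {r c : Fin m} (h : v c = 0) :
    Matrix.single r c 1 * Matrix.diagonal v = 0 := by
  ext i j
  rw [Matrix.mul_diagonal]
  by_cases hjc : c = j
  · subst hjc; rw [h, mul_zero]; rfl
  · rw [Matrix.single_apply_of_ne _ _ _ _ _ (by tauto), zero_mul]; rfl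

lemma gen_comm (hm : 7 ≤ m) (k l : Fin (m - 1)) :
    g m hm k * g m hm l = g m hm l * g m hm k := by
  unfold g
  split_ifs with h1 h2 h2
  · rfl
  · rw [show DD m = Matrix.diagonal (dvec m) from rfl,
      diagonal_mul_std m (dvec_row m hm l), std_mul_diagonal m (dvec_col m hm h2)]
  · rw [show DD m = Matrix.diagonal (dvec m) from rfl,
      diagonal_mul_std m (dvec_row m hm k), std_mul_diagonal m (dvec_col m hm h1)]
  · have hne1 : ccol m hm k ≠ rrow m hm l := by
      intro h
      have h4 := col_ge4 m hm h1
      have h5 := row_le1 m hm l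
      have h6 := congrArg Fin.val h
      omega
    have hne2 : ccol m hm l ≠ rrow m hm k := by
      intro h
      have h4 := col_ge4 m hm h2
      have h5 := row_le1 m hm k
      have h6 := congrArg Fin.val h
      omega
    rw [Matrix.single_mul_single_of_ne _ _ _ _ hne1, Matrix.single_mul_single_of_ne _ _ _ _ hne2]

lemma span_comm {s : Set (Mat m)} (h : ∀ x ∈ s, ∀ y ∈ s, x * y = y * x) :
    ∀ X ∈ Submodule.span ℝ s, ∀ Y ∈ Submodule.span ℝ s, X * Y = Y * X := by
  have step1 : ∀ x ∈ s, ∀ Y ∈ Submodule.span ℝ s, x * Y = Y * x := by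
    intro x hx Y hY
    induction hY using Submodule.span_induction with
    | mem y hy => exact h x hx y hy
    | zero => simp
    | add y z hy hz hy' hz' => rw [mul_add, add_mul, hy', hz']
    | smul t y hy hy' => rw [Matrix.mul_smul, Matrix.smul_mul, hy']
  intro X hX
  induction hX using Submodule.span_induction with
  | mem x hx => exact fun Y hY => step1 x hx Y hY
  | zero => intro Y hY; simp
  | add x z hx hz hx' hz' => intro Y hY; rw [add_mul, mul_add, hx' Y hY, hz' Y hY]
  | smul t x hx hx' => intro Y hY; rw [Matrix.smul_mul, Matrix.mul_smul, hx' Y hY]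

lemma trace_DD_zero (hm : 7 ≤ m) : Matrix.trace (DD m) = 0 := by
  have h2 : (2:ℕ) < m := by omega
  have h3 : (3:ℕ) < m := by omega
  rw [DD, Matrix.trace_diagonal]
  have key : ∀ i : Fin m, dvec m i
      = (if i = (⟨2, h2⟩ : Fin m) then (1:ℝ) else 0)
        - (if i = (⟨3, h3⟩ : Fin m) then (1:ℝ) else 0) := by
    intro i
    unfold dvec
    congr 1
    · exact if_congr (by simp [Fin.ext_iff]) rfl rfl
    · exact if_congr (by simp [Fin.ext_iff]) rfl rfl
  rw [Finset.sum_congr rfl (fun i _ => key i), Finset.sum_sub_distrib]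
  simp

lemma dvec_two (hm : 7 ≤ m) : dvec m (⟨2, by omega⟩ : Fin m) = 1 := by
  unfold dvec; norm_num

lemma trace_DD_sq (hm : 7 ≤ m) : (1:ℝ) ≤ Matrix.trace (DD m * DD m) := by
  rw [DD, Matrix.diagonal_mul_diagonal, Matrix.trace_diagonal]
  have h1 : (1:ℝ) = dvec m (⟨2, by omega⟩ : Fin m) * dvec m (⟨2, by omega⟩ : Fin m) := by
    rw [dvec_two m hm]; norm_num
  rw [h1]
  exact Finset.single_le_sum (f := fun i => dvec m i * dvec m i)
    (fun i _ => mul_self_nonneg _) (Finset.mem_univ _)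

lemma dvec_zero (hm : 7 ≤ m) : dvec m (⟨0, by omega⟩ : Fin m) = 0 := by
  unfold dvec; norm_num

lemma DD_sq_00 (hm : 7 ≤ m) :
    (DD m * DD m) (⟨0, by omega⟩ : Fin m) (⟨0, by omega⟩ : Fin m) = 0 := by
  rw [DD, Matrix.diagonal_mul_diagonal, Matrix.diagonal_apply_eq]
  rw [dvec_zero m hm]
  ring

lemma entry00 (hm : 7 ≤ m) : ∀ X ∈ Submodule.span ℝ (Set.range (g m hm)),
    X (⟨0, by omega⟩ : Fin m) (⟨0, by omega⟩ : Fin m) = 0 := by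
  intro X hX
  induction hX using Submodule.span_induction with
  | mem x hx =>
    obtain ⟨k, rfl⟩ := hx
    unfold g
    split_ifs with hk0
    · rw [DD, Matrix.diagonal_apply_eq, dvec_zero m hm]
    · refine Matrix.single_apply_of_ne _ _ _ _ _ ?_
      rintro ⟨-, hc⟩
      have h4 := col_ge4 m hm hk0
      have h5 := congrArg Fin.val hc
      simp only [Fin.val_mk] at h5
      omega
  | zero => rfl
  | add x y hx hy hx' hy' => simp [hx', hy']
  | smul t x hx hx' => simp [hx']

lemma upper_trace (hm : 7 ≤ m) : ∀ X ∈ Submodule.span ℝ (Set.range (g m hm)),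
    (∀ i j : Fin m, j < i → X i j = 0) ∧ Matrix.trace X = 0 := by
  intro X hX
  induction hX using Submodule.span_induction with
  | mem x hx =>
    obtain ⟨k, rfl⟩ := hx
    unfold g
    split_ifs with hk0
    · constructor
      · intro i j hij
        rw [DD]
        exact Matrix.diagonal_apply_ne _ (hij.ne')
      · exact trace_DD_zero m hm
    · constructor
      · intro i j hij
        refine Matrix.single_apply_of_ne _ _ _ _ _ ?_
        rintro ⟨hr, hc⟩
        have h1 := row_le1 m hm k
        have h2 := col_ge4 m hm hk0
        have h4 := congrArg Fin.val hr
        have h5 := congrArg Fin.val hc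
        have h3 : (j : ℕ) < (i : ℕ) := hij
        omega
      · refine Matrix.trace_single_eq_of_ne _ _ _ ?_
        intro h
        have h1 := row_le1 m hm k
        have h2 := col_ge4 m hm hk0
        have h4 := congrArg Fin.val h
        omega
  | zero => exact ⟨fun i j _ => rfl, by simp⟩
  | add x y hx hy hx' hy' =>
    exact ⟨fun i j hij => by simp [hx'.1 i j hij, hy'.1 i j hij],
      by rw [Matrix.trace_add, hx'.2, hy'.2, add_zero]⟩
  | smul t x hx hx' =>
    exact ⟨fun i j hij => by simp [hx'.1 i j hij],
      by rw [Matrix.trace_smul, hx'.2, smul_zero]⟩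

def prow (hm : 7 ≤ m) (k : Fin (m - 1)) : Fin m :=
  if (k : ℕ) = 0 then ⟨2, by omega⟩ else rrow m hm k

def pcol (hm : 7 ≤ m) (k : Fin (m - 1)) : Fin m :=
  if (k : ℕ) = 0 then ⟨2, by omega⟩ else ccol m hm k

def Phi (hm : 7 ≤ m) : Mat m →ₗ[ℝ] (Fin (m - 1) → ℝ) where
  toFun X := fun k => X (prow m hm k) (pcol m hm k)
  map_add' := by intros; rfl
  map_smul' := by intros; rfl

lemma Phi_g (hm : 7 ≤ m) (l : Fin (m - 1)) : Phi m hm (g m hm l) = Pi.single l 1 := by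
  funext k
  have hk : Phi m hm (g m hm l) k = (g m hm l) (prow m hm k) (pcol m hm k) := rfl
  rw [hk, Pi.single_apply]
  by_cases hl : (l : ℕ) = 0
  · rw [g, if_pos hl]
    by_cases hk0 : (k : ℕ) = 0
    · have hkl : k = l := Fin.ext (by omega)
      rw [if_pos hkl, prow, pcol, if_pos hk0, if_pos hk0, DD, Matrix.diagonal_apply_eq,
        dvec_two m hm]
    · have hne : ¬(k = l) := fun h => hk0 (by rw [h]; exact hl)
      rw [if_neg hne, prow, pcol, if_neg hk0, if_neg hk0, DD]
      refine Matrix.diagonal_apply_ne _ ?_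
      intro h
      have h1 := row_le1 m hm k
      have h2 := col_ge4 m hm hk0
      have h4 := congrArg Fin.val h
      omega
  · rw [g, if_neg hl]
    by_cases hk0 : (k : ℕ) = 0
    · have hne : ¬(k = l) := fun h => hl (by rw [← h]; exact hk0)
      rw [if_neg hne, prow, pcol, if_pos hk0, if_pos hk0]
      refine Matrix.single_apply_of_ne _ _ _ _ _ ?_
      rintro ⟨hr, -⟩
      have h1 := row_le1 m hm l
      have h4 := congrArg Fin.val hr
      simp only [Fin.val_mk] at h4
      omega
    · rw [prow, pcol, if_neg hk0, if_neg hk0]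
      by_cases hkl : k = l
      · subst hkl
        rw [if_pos rfl]
        exact Matrix.single_apply_same _ _ _
      · rw [if_neg hkl]
        refine Matrix.single_apply_of_ne _ _ _ _ _ ?_
        rintro ⟨hr, hc⟩
        exact hkl (pos_inj m hm hl hk0 hr hc).symm

lemma g_indep (hm : 7 ≤ m) : LinearIndependent ℝ (g m hm) := by
  have h1 : LinearIndependent ℝ (fun l : Fin (m - 1) => (Pi.single l 1 : Fin (m - 1) → ℝ)) := by
    have h0 := (Pi.basisFun ℝ (Fin (m - 1))).linearIndependent
    convert h0 using 1
    funext l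
    rw [Pi.basisFun_apply]
  have h2 : (Phi m hm) ∘ (g m hm) = fun l => (Pi.single l 1 : Fin (m - 1) → ℝ) := by
    funext l
    exact Phi_g m hm l
  exact LinearIndependent.of_comp (Phi m hm) (by rw [h2]; exact h1)

end Construction

end Stmt9Aux

open Stmt9Aux

/-- For `m ≥ 7`, there is an abelian subalgebra of `𝔰𝔩_m(ℝ)` of dimension `m − 1`,
contained in the standard Borel subalgebra of upper triangular traceless matrices, which
is not a limit in the Grassmannian of Cartan subspaces. -/
theorem stmt9 (m : ℕ) (hm : 7 ≤ m) :
    ∃ L : Submodule ℝ (Matrix (Fin m) (Fin m) ℝ),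
      (∀ X ∈ L, (∀ i j : Fin m, j < i → X i j = 0) ∧ Matrix.trace X = 0) ∧
      Module.finrank ℝ L = m - 1 ∧
      (∀ X ∈ L, ∀ Y ∈ L, X * Y = Y * X) ∧
      ¬ ∃ C : ℕ → Submodule ℝ (Matrix (Fin m) (Fin m) ℝ),
          (∀ n, IsCartanSubspace (C n)) ∧
          GrLimit (fun n => ((C n : Set (Matrix (Fin m) (Fin m) ℝ))))
            (L : Set (Matrix (Fin m) (Fin m) ℝ)) := by
  classical
  set L : Submodule ℝ (Mat m) := Submodule.span ℝ (Set.range (g m hm)) with hL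
  have hfinrank : Module.finrank ℝ L = m - 1 := by
    rw [hL, finrank_span_eq_card (g_indep m hm), Fintype.card_fin]
  have hcommL : ∀ X ∈ L, ∀ Y ∈ L, X * Y = Y * X := by
    refine span_comm m ?_
    rintro x ⟨k, rfl⟩ y ⟨l, rfl⟩
    exact gen_comm m hm k l
  refine ⟨L, upper_trace m hm, hfinrank, hcommL, ?_⟩
  rintro ⟨C, hCart, hGr⟩
  have hDmem : DD m ∈ L := by
    refine Submodule.subset_span ⟨⟨0, by omega⟩, ?_⟩
    rw [g, if_pos rfl]
  obtain ⟨u, huC, hulim⟩ := hGr.1 (DD m) hDmem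
  set F : Mat m → Mat m := fun A => A * A - ((Matrix.trace (A * A)) / (m:ℝ)) • 1 with hF
  have hFc : Continuous F := by
    refine Continuous.sub (continuous_id.matrix_mul continuous_id) ?_
    exact (((continuous_id.matrix_mul continuous_id).matrix_trace).div_const (m:ℝ)).smul
      continuous_const
  have hwC : ∀ n, F (u n) ∈ C n := fun n => cartan_closure (by omega) (hCart n) (huC n)
  have hWlim : Tendsto (fun n => F (u n)) atTop (nhds (F (DD m))) :=
    (hFc.tendsto (DD m)).comp hulim
  have hWL : F (DD m) ∈ L := hGr.2 id strictMono_id (fun n => F (u n)) hwC (F (DD m)) hWlim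
  have h00 : (F (DD m)) (⟨0, by omega⟩ : Fin m) (⟨0, by omega⟩ : Fin m) = 0 :=
    entry00 m hm (F (DD m)) hWL
  have hval : (F (DD m)) (⟨0, by omega⟩ : Fin m) (⟨0, by omega⟩ : Fin m)
      = - (Matrix.trace (DD m * DD m) / (m:ℝ)) := by
    rw [hF]
    simp only [Matrix.sub_apply, Matrix.smul_apply, Matrix.one_apply_eq, smul_eq_mul, mul_one]
    rw [DD_sq_00 m hm, zero_sub]
  have htr := trace_DD_sq m hm
  have hm0 : (0:ℝ) < (m:ℝ) := by
    have : 0 < m := by omega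
    exact_mod_cast this
  rw [hval] at h00
  have : Matrix.trace (DD m * DD m) = 0 := by
    field_simp at h00
    linarith
  linarith
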